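/- arXiv:2006.13977 — 2 statements merged into one kernel-verified Lean document; each statement's English description precedes it below -/
import Mathlib

section
/- Let (Ω, 𝒫) be a probability space, let S and T be measurable spaces, and let g : S × T → ℝ be a measurable function taking values in {0,1}. Let X₁, …, Xₙ be i.i.d. S-valued random variables with common law μ, let W₁, …, W_l be i.i.d. T-valued random variables with common law ν, and suppose the whole family (X₁,…,Xₙ, W₁,…,W_l) is jointly independent. Then for every ε > 0, 𝒫( (1/(n·l)) · Σ_{j=1}^{n} Σ_{i=1}^{l} g(X_j, W_i) − ∫_S ∫_T g(x,w) dν(w) dμ(x) ≥ ε ) ≤ (n+1) · exp( − n ε² · l / (√l + √n)² ). -/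
open MeasureTheory ProbabilityTheory

universe u

/-- The codomain family for the combined family of random variables indexed by `ι ⊕ κ`:
the first block takes values in `S`, the second in `T`. -/
def sumType (S T : Type u) {ι κ : Type*} : ι ⊕ κ → Type u
  | .inl _ => S
  | .inr _ => T

/-- The corresponding family of measurable space structures. -/
def sumMS {S T : Type u} {ι κ : Type*} (mS : MeasurableSpace S) (mT : MeasurableSpace T) :
    ∀ k : ι ⊕ κ, MeasurableSpace (sumType S T k)
  | .inl _ => mS
  | .inr _ => mT

/-- The combined family of random variables `(X₁, …, Xₙ, W₁, …, W_l)`. -/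
def sumFun {Ω : Type*} {S T : Type u} {ι κ : Type*} (X : ι → Ω → S) (W : κ → Ω → T) :
    ∀ k : ι ⊕ κ, Ω → sumType S T k
  | .inl j => X j
  | .inr i => W i

section AuxHoeffding
open Real MeasureTheory ProbabilityTheory

/-- `e^x ≤ 1 + x + x²` for `0 ≤ x ≤ 1`. -/
lemma exp_le_quad {x : ℝ} (h0 : 0 ≤ x) (h1 : x ≤ 1) : Real.exp x ≤ 1 + x + x ^ 2 := by
  have hb := Real.exp_bound (x := x) (by rw [abs_of_nonneg h0]; exact h1) (n := 3) (by norm_num)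
  rw [abs_of_nonneg h0] at hb
  have hs : ∑ i ∈ Finset.range 3, x ^ i / (Nat.factorial i) = 1 + x + x^2/2 := by
    simp [Finset.sum_range_succ, Nat.factorial]
  rw [hs] at hb
  have h2 := (abs_le.1 hb).2
  have h3 : x ^ 3 ≤ x ^ 2 := pow_le_pow_of_le_one h0 h1 (by norm_num)
  have h4 : x ^ 3 * (((Nat.succ 3 : ℕ) : ℝ) / ((Nat.factorial 3 : ℕ) * (3:ℕ))) = x^3 * (2/9) := by
    norm_num [Nat.factorial]
  rw [h4] at h2
  nlinarith [pow_nonneg h0 3]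

/-- key second-derivative inequality: `e^x ≤ (2 + x²) e^{x²/4}` for `x ≥ 0`. -/
lemma exp_le_quad_exp {x : ℝ} (hx : 0 ≤ x) : Real.exp x ≤ (2 + x ^ 2) * Real.exp (x ^ 2 / 4) := by
  rcases le_or_gt x 1 with h1 | h1
  · have := exp_le_quad hx h1
    have h2 : (1:ℝ) ≤ Real.exp (x^2/4) := Real.one_le_exp (by positivity)
    nlinarith [sq_nonneg x]
  · have key : Real.exp x ≤ Real.exp (x ^ 2 / 4) * Real.exp 1 := by
      rw [← Real.exp_add]
      apply Real.exp_le_exp.2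
      nlinarith [sq_nonneg (x - 2)]
    have he : Real.exp 1 ≤ 3 := by
      have := Real.exp_one_lt_d9
      linarith
    have h3 : (3:ℝ) ≤ 2 + x^2 := by nlinarith
    have hE := Real.exp_pos (x^2/4)
    calc Real.exp x ≤ Real.exp (x^2/4) * Real.exp 1 := key
      _ ≤ Real.exp (x^2/4) * 3 := by nlinarith
      _ ≤ (2 + x^2) * Real.exp (x^2/4) := by nlinarith

/-- A helper: a function with `f 0 = 0` whose derivative is nonneg on `Ioi 0` is nonneg on `Ici 0`. -/
lemma nonneg_of_deriv (f f' : ℝ → ℝ) (hd : ∀ x, HasDerivAt f (f' x) x)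
    (h0 : f 0 = 0) (hf' : ∀ x, 0 < x → 0 ≤ f' x) {x : ℝ} (hx : 0 ≤ x) : 0 ≤ f x := by
  have hmono : MonotoneOn f (Set.Ici 0) := by
    apply monotoneOn_of_deriv_nonneg (convex_Ici 0)
    · exact fun y _ => (hd y).continuousAt.continuousWithinAt
    · exact fun y _ => ((hd y).differentiableAt).differentiableWithinAt
    · intro y hy
      rw [interior_Ici] at hy
      rw [(hd y).deriv]
      exact hf' y hy
  have := hmono (Set.self_mem_Ici) hx hx
  rwa [h0] at this

/-- Derivative of `x ↦ exp (x²/4)`. -/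
lemma hasDerivAt_exp_sq (x : ℝ) : HasDerivAt (fun x : ℝ => Real.exp (x ^ 2 / 4)) (x / 2 * Real.exp (x ^ 2 / 4)) x := by
  have h1 : HasDerivAt (fun x : ℝ => x ^ 2 / 4) (x / 2) x := by
    have := (hasDerivAt_pow 2 x).div_const 4
    exact this.congr_deriv (by norm_num; ring)
  have := h1.exp
  convert this using 1
  ring

/-- Lemma C: `1 + (e^s − 1 − s)/4 ≤ e^{s²/4}` for `s ≥ 0`. -/
lemma lemC {s : ℝ} (hs : 0 ≤ s) : 1 + (Real.exp s - 1 - s) / 4 ≤ Real.exp (s ^ 2 / 4) := by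
  -- h x = exp(x²/4) − 1 − (exp x − 1 − x)/4 ; h' = g1 ; g1' = g2
  set g1 : ℝ → ℝ := fun x => x / 2 * Real.exp (x ^ 2 / 4) - (Real.exp x - 1) / 4 with hg1
  have hg1d : ∀ x, HasDerivAt g1 ((1 / 2 + x ^ 2 / 4) * Real.exp (x ^ 2 / 4) - Real.exp x / 4) x := by
    intro x
    have h1 : HasDerivAt (fun x : ℝ => x / 2) (1 / 2) x := (hasDerivAt_id x).div_const 2
    have h2 := h1.mul (hasDerivAt_exp_sq x)
    have h3 : HasDerivAt (fun x : ℝ => (Real.exp x - 1) / 4) (Real.exp x / 4) x := by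
      have := ((Real.hasDerivAt_exp x).sub_const 1).div_const 4
      convert this using 1
    have := h2.sub h3
    exact this.congr_deriv (by ring)
  have hg1nonneg : ∀ x, 0 ≤ x → 0 ≤ g1 x := by
    intro x hx
    apply nonneg_of_deriv g1 _ hg1d (by simp [hg1]) _ hx
    intro y hy
    have hkey := exp_le_quad_exp hy.le
    nlinarith [Real.exp_pos (y ^ 2 / 4)]
  have hfinal : 0 ≤ Real.exp (s ^ 2 / 4) - (1 + (Real.exp s - 1 - s) / 4) := by
    apply nonneg_of_deriv _ g1 _ (by simp) (fun y hy => hg1nonneg y hy.le) hs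
    intro x
    have h1 := hasDerivAt_exp_sq x
    have h2 : HasDerivAt (fun x : ℝ => 1 + (Real.exp x - 1 - x) / 4) ((Real.exp x - 1) / 4) x := by
      have := ((((Real.hasDerivAt_exp x).sub_const 1).sub (hasDerivAt_id x)).div_const 4).const_add 1
      exact this
    have := h1.sub h2
    exact this
  linarith

/-- Lemma B: for `p ∈ [0,1]`, `s ≥ 0`:
`(1−p)e^{−ps} + p e^{(1−p)s} ≤ 1 + (e^s−1−s)/4`. -/
lemma lemB {p s : ℝ} (hp0 : 0 ≤ p) (hp1 : p ≤ 1) (hs : 0 ≤ s) :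
    (1 - p) * Real.exp (-p * s) + p * Real.exp ((1 - p) * s) ≤ 1 + (Real.exp s - 1 - s) / 4 := by
  have hd : ∀ x : ℝ, HasDerivAt
      (fun x => 1 + (Real.exp x - 1 - x) / 4 - ((1 - p) * Real.exp (-p * x) + p * Real.exp ((1 - p) * x)))
      ((Real.exp x - 1) / 4 - (p * (1 - p) * Real.exp ((1 - p) * x) - p * (1 - p) * Real.exp (-p * x))) x := by
    intro x
    have h1 : HasDerivAt (fun x : ℝ => 1 + (Real.exp x - 1 - x) / 4) ((Real.exp x - 1) / 4) x := by
      have := ((((Real.hasDerivAt_exp x).sub_const 1).sub (hasDerivAt_id x)).div_const 4).const_add 1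
      exact this
    have h2 : HasDerivAt (fun x : ℝ => Real.exp (-p * x)) (Real.exp (-p * x) * (-p)) x := by
      have := ((hasDerivAt_id x).const_mul (-p)).exp
      simpa using this
    have h3 : HasDerivAt (fun x : ℝ => Real.exp ((1 - p) * x)) (Real.exp ((1 - p) * x) * (1 - p)) x := by
      have := ((hasDerivAt_id x).const_mul (1 - p)).exp
      simpa using this
    have := h1.sub ((h2.const_mul (1 - p)).add (h3.const_mul p))
    exact this.congr_deriv (by ring)
  have key : 0 ≤ 1 + (Real.exp s - 1 - s) / 4 - ((1 - p) * Real.exp (-p * s) + p * Real.exp ((1 - p) * s)) := by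
    apply nonneg_of_deriv _ _ hd (by simp) _ hs
    intro x hx
    -- show (e^x−1)/4 ≥ p(1−p)(e^{(1−p)x} − e^{−px})
    have hpq : p * (1 - p) ≤ 1 / 4 := by nlinarith [sq_nonneg (2*p-1)]
    have hpq0 : 0 ≤ p * (1 - p) := by nlinarith
    have hmono : Real.exp (-p * x) ≤ Real.exp ((1 - p) * x) := by
      apply Real.exp_le_exp.2
      nlinarith
    -- convexity: e^{(1−p)x} ≤ (1−p)e^x + p
    have hconv : Real.exp ((1 - p) * x) ≤ (1 - p) * Real.exp x + p := by
      have := (convexOn_exp).2 (Set.mem_univ x) (Set.mem_univ (0:ℝ))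
        (by linarith : (0:ℝ) ≤ 1 - p) hp0 (by ring)
      simp only [smul_eq_mul, mul_zero, add_zero, Real.exp_zero, mul_one] at this
      linarith
    have hlin : 1 - p * x ≤ Real.exp (-p * x) := by
      have := Real.add_one_le_exp (-p * x)
      linarith
    have hxe : x ≤ Real.exp x - 1 := by
      have := Real.add_one_le_exp x
      linarith
    have hdiff : Real.exp ((1 - p) * x) - Real.exp (-p * x) ≤ Real.exp x - 1 := by
      have h5 : Real.exp ((1 - p) * x) - Real.exp (-p * x) ≤ (1 - p) * Real.exp x + p - (1 - p * x) := by
        linarith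
      nlinarith
    nlinarith [mul_le_mul_of_nonneg_left hdiff hpq0,
      mul_le_mul_of_nonneg_right hpq (sub_nonneg.2 hmono)]
  linarith

/-- mgf bound for a `[0,1]`-mean: `1 − p + p e^s ≤ e^{ps + s²/4}`. -/
lemma lemL1 {p s : ℝ} (hp0 : 0 ≤ p) (hp1 : p ≤ 1) (hs : 0 ≤ s) :
    1 - p + p * Real.exp s ≤ Real.exp (p * s + s ^ 2 / 4) := by
  have e1 : Real.exp (p * s) * Real.exp (-p * s) = 1 := by
    rw [← Real.exp_add]; simp
  have e2 : Real.exp (p * s) * Real.exp ((1 - p) * s) = Real.exp s := by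
    rw [← Real.exp_add]; congr 1; ring
  have h1 : 1 - p + p * Real.exp s
      = Real.exp (p * s) * ((1 - p) * Real.exp (-p * s) + p * Real.exp ((1 - p) * s)) := by
    linear_combination (p - 1) * e1 - p * e2
  rw [h1, Real.exp_add]
  have h2 := (lemB hp0 hp1 hs).trans (lemC hs)
  have := Real.exp_pos (p * s)
  nlinarith

/-- **Chernoff/Hoeffding bound on a finite product of probability measures.**
If `f : α → ℝ` is measurable with values in `[0,1]` and mean `m`, then for `t ≥ 0`,
`Pm {w | k(m+t) ≤ ∑ f(wᵢ)} ≤ exp (−k t²)` where `Pm = ρ^⊗k`. -/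
lemma chernoff_pi {α : Type*} [MeasurableSpace α] (ρ : Measure α) [IsProbabilityMeasure ρ]
    (f : α → ℝ) (hf : Measurable f) (h0 : ∀ a, 0 ≤ f a) (h1 : ∀ a, f a ≤ 1)
    (k : ℕ) (t : ℝ) (ht : 0 ≤ t) :
    Measure.pi (fun _ : Fin k => ρ) {w | (k : ℝ) * ((∫ a, f a ∂ρ) + t) ≤ ∑ i, f (w i)}
      ≤ ENNReal.ofReal (Real.exp (-((k : ℝ) * t ^ 2))) := by
  classical
  set m := ∫ a, f a ∂ρ with hm
  set s := 2 * t with hsdef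
  have hs : 0 ≤ s := by positivity
  -- integrability of f
  have hfint : Integrable f ρ := by
    refine (integrable_const (1:ℝ)).mono' hf.aestronglyMeasurable ?_
    exact ae_of_all _ fun a => by rw [Real.norm_eq_abs, abs_of_nonneg (h0 a)]; exact h1 a
  have hm0 : 0 ≤ m := integral_nonneg h0
  have hm1 : m ≤ 1 := by
    calc m ≤ ∫ _, (1:ℝ) ∂ρ := integral_mono hfint (integrable_const 1) h1
    _ = 1 := by simp
  -- per-coordinate mgf bound
  have hmgf : ∫ a, Real.exp (s * f a) ∂ρ ≤ Real.exp (s * m + s ^ 2 / 4) := by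
    have hintexp : Integrable (fun a => Real.exp (s * f a)) ρ := by
      refine (integrable_const (Real.exp s)).mono'
        ((hf.const_mul s).exp.aestronglyMeasurable) ?_
      refine ae_of_all _ fun a => ?_
      rw [Real.norm_eq_abs, abs_of_pos (Real.exp_pos _)]
      exact Real.exp_le_exp.2 (by nlinarith [h0 a, h1 a])
    have hpt : ∀ a, Real.exp (s * f a) ≤ 1 - f a + f a * Real.exp s := by
      intro a
      have := (convexOn_exp).2 (Set.mem_univ (0:ℝ)) (Set.mem_univ s)
        (by linarith [h1 a] : (0:ℝ) ≤ 1 - f a) (h0 a) (by ring)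
      simp only [smul_eq_mul, mul_zero, zero_add, Real.exp_zero, mul_one] at this
      calc Real.exp (s * f a) = Real.exp (f a * s) := by rw [mul_comm]
      _ ≤ 1 - f a + f a * Real.exp s := this
    have hint2 : Integrable (fun a => 1 - f a + f a * Real.exp s) ρ :=
      ((integrable_const (1:ℝ)).sub hfint).add (hfint.mul_const _)
    calc ∫ a, Real.exp (s * f a) ∂ρ ≤ ∫ a, (1 - f a + f a * Real.exp s) ∂ρ :=
        integral_mono hintexp hint2 hpt
    _ = 1 - m + m * Real.exp s := by
        have hsub : Integrable (fun a => 1 - f a) ρ := by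
          exact (integrable_const (1:ℝ)).sub hfint
        rw [integral_add hsub (hfint.mul_const _),
          integral_sub (integrable_const 1) hfint, integral_mul_const]
        simp [hm]
    _ ≤ Real.exp (m * s + s ^ 2 / 4) := lemL1 hm0 hm1 hs
    _ = Real.exp (s * m + s ^ 2 / 4) := by rw [mul_comm m s]
  -- the product integral
  letI : MeasureSpace α := ⟨ρ⟩
  have hvol : (volume : Measure α) = ρ := rfl
  have hprod : ∫ w : Fin k → α, ∏ i, Real.exp (s * f (w i)) ∂(Measure.pi fun _ : Fin k => ρ)
      = (∫ a, Real.exp (s * f a) ∂ρ) ^ k := by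
    have := MeasureTheory.integral_fintype_prod_eq_pow (𝕜 := ℝ) (ι := Fin k) (μ := ρ)
      (fun a => Real.exp (s * f a)) (E := α)
    simpa [volume_pi, hvol] using this
  -- Markov / Chernoff
  set Pm : Measure (Fin k → α) := Measure.pi (fun _ : Fin k => ρ) with hPm
  haveI : IsProbabilityMeasure Pm := by
    constructor
    rw [hPm]
    simp [Measure.pi_univ]
  set G : (Fin k → α) → ℝ := fun w => Real.exp (s * ∑ i, f (w i)) with hG
  have hGeq : ∀ w, G w = ∏ i, Real.exp (s * f (w i)) := by
    intro w
    rw [hG]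
    simp only
    rw [Finset.mul_sum, Real.exp_sum]
  have hGmeas : Measurable G := by
    apply Real.measurable_exp.comp
    exact (Finset.measurable_sum Finset.univ fun i _ => hf.comp (measurable_pi_apply i)).const_mul s
  have hGnonneg : ∀ w, 0 ≤ G w := fun w => (Real.exp_pos _).le
  have hGint : Integrable G Pm := by
    refine (integrable_const (Real.exp (s * k))).mono' hGmeas.aestronglyMeasurable ?_
    refine ae_of_all _ fun w => ?_
    rw [Real.norm_eq_abs, abs_of_pos (Real.exp_pos _)]
    apply Real.exp_le_exp.2
    apply mul_le_mul_of_nonneg_left _ hs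
    calc ∑ i, f (w i) ≤ ∑ _i : Fin k, (1:ℝ) := Finset.sum_le_sum fun i _ => h1 (w i)
    _ = k := by simp
  have hGint2 : ∫ w, G w ∂Pm ≤ Real.exp (s * m + s ^ 2 / 4) ^ k := by
    have h5 : ∫ w, G w ∂Pm = (∫ a, Real.exp (s * f a) ∂ρ) ^ k := by
      rw [← hprod]
      exact integral_congr_ae (ae_of_all _ fun w => hGeq w)
    rw [h5]
    exact pow_le_pow_left₀ (integral_nonneg fun a => (Real.exp_pos _).le) hmgf k
  set ε₀ : ℝ := Real.exp (s * ((k : ℝ) * (m + t))) with hε₀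
  have hmarkov := mul_meas_ge_le_integral_of_nonneg
    (ae_of_all Pm fun w => hGnonneg w) hGint ε₀
  have hsub : {w : Fin k → α | (k : ℝ) * (m + t) ≤ ∑ i, f (w i)} ⊆ {w | ε₀ ≤ G w} := by
    intro w hw
    simp only [Set.mem_setOf_eq] at hw ⊢
    exact Real.exp_le_exp.2 (mul_le_mul_of_nonneg_left hw hs)
  have hfin : Pm {w : Fin k → α | (k : ℝ) * (m + t) ≤ ∑ i, f (w i)} ≠ ⊤ := measure_ne_top Pm _
  rw [ENNReal.le_ofReal_iff_toReal_le hfin (Real.exp_pos _).le]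
  have hmono := measure_mono (μ := Pm) hsub
  have htoReal : (Pm {w : Fin k → α | (k : ℝ) * (m + t) ≤ ∑ i, f (w i)}).toReal
      ≤ (Pm {w | ε₀ ≤ G w}).toReal := ENNReal.toReal_mono (measure_ne_top Pm _) hmono
  have hε₀pos : 0 < ε₀ := Real.exp_pos _
  have hfinal : (Pm {w | ε₀ ≤ G w}).toReal ≤ Real.exp (-((k : ℝ) * t ^ 2)) := by
    have h6 : (Pm {w | ε₀ ≤ G w}).toReal ≤ (∫ w, G w ∂Pm) / ε₀ := by
      rw [le_div_iff₀ hε₀pos]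
      calc (Pm {w | ε₀ ≤ G w}).toReal * ε₀ = ε₀ * (Pm {w | ε₀ ≤ G w}).toReal := by ring
      _ ≤ ∫ w, G w ∂Pm := hmarkov
    refine h6.trans ?_
    rw [div_le_iff₀ hε₀pos]
    calc ∫ w, G w ∂Pm ≤ Real.exp (s * m + s ^ 2 / 4) ^ k := hGint2
    _ = Real.exp ((k : ℝ) * (s * m + s ^ 2 / 4)) := by
        rw [← Real.exp_nat_mul]
    _ = Real.exp (-((k : ℝ) * t ^ 2)) * ε₀ := by
        rw [hε₀, ← Real.exp_add]
        congr 1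
        rw [hsdef]
        ring
  linarith

/-- Joint law of a finite independent family equals the product of the marginals. -/
lemma joint_law_eq_pi {Ω : Type*} [MeasureSpace Ω] [IsProbabilityMeasure (ℙ : Measure Ω)]
    {ι : Type*} [Fintype ι] {β : ι → Type*} {mβ : ∀ i, MeasurableSpace (β i)}
    (F : ∀ i, Ω → β i) (hF : ∀ i, Measurable (F i))
    (h : iIndepFun (m := mβ) F ℙ) :
    Measure.map (fun ω i => F i ω) ℙ = Measure.pi (fun i => Measure.map (F i) ℙ) := by
  classical
  haveI : ∀ i, IsProbabilityMeasure (Measure.map (F i) ℙ) :=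
    fun i => Measure.isProbabilityMeasure_map (hF i).aemeasurable
  have hbig : Measurable (fun ω i => F i ω) := measurable_pi_lambda _ hF
  refine (Measure.pi_eq fun s hs => ?_).symm
  rw [Measure.map_apply hbig (MeasurableSet.univ_pi hs)]
  have hpre : (fun ω i => F i ω) ⁻¹' (Set.pi Set.univ s) = ⋂ i ∈ Finset.univ, F i ⁻¹' s i := by
    ext ω
    simp [Set.mem_pi]
  rw [hpre, h.measure_inter_preimage_eq_mul Finset.univ (fun i _ => hs i)]
  exact Finset.prod_congr rfl fun i _ =>
    (Measure.map_apply (hF i) (hs i)).symm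

/-- Pushforward of a finite product of probability measures under a coordinate evaluation. -/
lemma map_eval_pi {ι : Type*} [Fintype ι] {β : ι → Type*} [∀ i, MeasurableSpace (β i)]
    (μ : ∀ i, Measure (β i)) [∀ i, IsProbabilityMeasure (μ i)] (j : ι) :
    Measure.map (Function.eval j) (Measure.pi μ) = μ j := by
  classical
  ext s hs
  rw [Measure.map_apply (measurable_pi_apply j) hs]
  have hpre : Function.eval j ⁻¹' s
      = Set.pi Set.univ (Function.update (fun i => (Set.univ : Set (β i))) j s) := by
    ext x
    simp only [Set.mem_preimage, Set.mem_pi, Set.mem_univ, forall_true_left]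
    constructor
    · intro hx i
      rcases eq_or_ne i j with rfl | hij
      · rwa [Function.update_self]
      · rw [Function.update_of_ne hij]; exact Set.mem_univ _
    · intro hx
      have := hx j
      rwa [Function.update_self] at this
  rw [hpre, Measure.pi_pi]
  rw [Finset.prod_eq_single j
    (fun i _ hij => by rw [Function.update_of_ne hij]; simp)
    (fun h => absurd (Finset.mem_univ j) h)]
  rw [Function.update_self]

end AuxHoeffding

/-- **Proposition 1 (main bound).** If `X₁, …, Xₙ` are i.i.d. with law `μ`, `W₁, …, W_l` are
i.i.d. with law `ν`, the whole family is jointly independent, and `g` is a measurable `{0,1}`-valued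
function, then the probability that the empirical double average exceeds the expected value
`∫∫ g dν dμ` by at least `ε` is at most `(n+1)·exp(−nε²·l/(√l+√n)²)`. -/
theorem stmt0 {Ω : Type*} {S T : Type u} [MeasureSpace Ω]
    [IsProbabilityMeasure (ℙ : Measure Ω)]
    [mS : MeasurableSpace S] [mT : MeasurableSpace T]
    (μ : Measure S) (ν : Measure T)
    (g : S × T → ℝ) (hg : Measurable g) (hg01 : ∀ p, g p = 0 ∨ g p = 1)
    (n l : ℕ) (hn : 0 < n) (hl : 0 < l)
    (X : Fin n → Ω → S) (W : Fin l → Ω → T)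
    (hXm : ∀ j, Measurable (X j)) (hWm : ∀ i, Measurable (W i))
    (hXlaw : ∀ j, Measure.map (X j) ℙ = μ)
    (hWlaw : ∀ i, Measure.map (W i) ℙ = ν)
    (hindep : iIndepFun (m := sumMS mS mT) (sumFun X W) ℙ)
    (ε : ℝ) (hε : 0 < ε) :
    ℙ {ω | (1 / ((n : ℝ) * l)) * ∑ j : Fin n, ∑ i : Fin l, g (X j ω, W i ω)
        - ∫ x, ∫ w, g (x, w) ∂ν ∂μ ≥ ε}
      ≤ ENNReal.ofReal
          (((n : ℝ) + 1) * Real.exp (-((n : ℝ) * ε ^ 2 * l / (Real.sqrt l + Real.sqrt n) ^ 2))) := by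
  classical
  letI : ∀ k : Fin n ⊕ Fin l, MeasurableSpace (sumType S T k) := sumMS mS mT
  -- probability measures
  haveI hμP : IsProbabilityMeasure μ := by
    rw [← hXlaw ⟨0, hn⟩]; exact Measure.isProbabilityMeasure_map (hXm _).aemeasurable
  haveI hνP : IsProbabilityMeasure ν := by
    rw [← hWlaw ⟨0, hl⟩]; exact Measure.isProbabilityMeasure_map (hWm _).aemeasurable
  -- the conditional mean function
  set p : S → ℝ := fun x => ∫ w, g (x, w) ∂ν with hpdef
  have hp_meas : Measurable p := by
    have : StronglyMeasurable fun x => ∫ w, g (x, w) ∂ν :=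
      hg.stronglyMeasurable.integral_prod_right'
    exact this.measurable
  have hg0 : ∀ q, 0 ≤ g q := fun q => by rcases hg01 q with h | h <;> rw [h] <;> norm_num
  have hg1 : ∀ q, g q ≤ 1 := fun q => by rcases hg01 q with h | h <;> rw [h] <;> norm_num
  have hgint : ∀ x, Integrable (fun w => g (x, w)) ν := by
    intro x
    refine (integrable_const (1:ℝ)).mono'
      ((hg.comp measurable_prodMk_left).aestronglyMeasurable) ?_
    exact ae_of_all _ fun w => by
      rw [Real.norm_eq_abs, abs_of_nonneg (hg0 _)]; exact hg1 _
  have hp0 : ∀ x, 0 ≤ p x := fun x => integral_nonneg fun w => hg0 _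
  have hp1 : ∀ x, p x ≤ 1 := by
    intro x
    calc p x ≤ ∫ _, (1:ℝ) ∂ν := integral_mono (hgint x) (integrable_const 1) fun w => hg1 _
    _ = 1 := by simp
  set m : ℝ := ∫ x, p x ∂μ with hm
  -- the split of ε
  set sn : ℝ := Real.sqrt n with hsn
  set sl : ℝ := Real.sqrt l with hsl
  have hsn0 : 0 < sn := Real.sqrt_pos.2 (by exact_mod_cast hn)
  have hsl0 : 0 < sl := Real.sqrt_pos.2 (by exact_mod_cast hl)
  have hden : 0 < sn + sl := by linarith
  set ε₁ : ℝ := ε * sl / (sn + sl) with hε₁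
  set ε₂ : ℝ := ε * sn / (sn + sl) with hε₂
  have hε₁0 : 0 ≤ ε₁ := by positivity
  have hε₂0 : 0 ≤ ε₂ := by positivity
  have hεsum : ε₁ + ε₂ = ε := by
    rw [hε₁, hε₂]
    field_simp
    ring
  have hsn2 : sn ^ 2 = (n : ℝ) := Real.sq_sqrt (Nat.cast_nonneg n)
  have hsl2 : sl ^ 2 = (l : ℝ) := Real.sq_sqrt (Nat.cast_nonneg l)
  set A : ℝ := (n : ℝ) * ε ^ 2 * l / (Real.sqrt l + Real.sqrt n) ^ 2 with hA
  have hA1 : (n : ℝ) * ε₁ ^ 2 = A := by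
    have h : ε₁ ^ 2 = ε ^ 2 * (l : ℝ) / (sn + sl) ^ 2 := by
      rw [hε₁, div_pow, mul_pow, hsl2]
    rw [h, hA, ← hsn, ← hsl]
    ring
  have hA2 : (l : ℝ) * ε₂ ^ 2 = A := by
    have h : ε₂ ^ 2 = ε ^ 2 * (n : ℝ) / (sn + sl) ^ 2 := by
      rw [hε₂, div_pow, mul_pow, hsn2]
    rw [h, hA, ← hsn, ← hsl]
    ring
  -- the joint law
  have hFmeas : ∀ k, Measurable (sumFun X W k) := by
    rintro (j | i)
    · exact hXm j
    · exact hWm i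
  set fam : ∀ k : Fin n ⊕ Fin l, Measure (sumType S T k) :=
    fun k => Measure.map (sumFun X W k) ℙ with hfam
  haveI : ∀ k, IsProbabilityMeasure (fam k) :=
    fun k => Measure.isProbabilityMeasure_map (hFmeas k).aemeasurable
  have hjoint : Measure.map (fun ω k => sumFun X W k ω) ℙ = Measure.pi fam :=
    joint_law_eq_pi (sumFun X W) hFmeas hindep
  have hfamL : (fun j : Fin n => fam (Sum.inl j)) = fun _ => μ := funext fun j => hXlaw j
  have hfamR : (fun i : Fin l => fam (Sum.inr i)) = fun _ => ν := funext fun i => hWlaw i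
  set e := MeasurableEquiv.sumPiEquivProdPi (sumType S T (ι := Fin n) (κ := Fin l)) with he
  have hMP := measurePreserving_sumPiEquivProdPi fam
  set πS : Measure (Fin n → S) := Measure.pi (fun _ : Fin n => μ) with hπS
  set πT : Measure (Fin l → T) := Measure.pi (fun _ : Fin l => ν) with hπT
  have hmapE : Measure.map (⇑e) (Measure.pi fam) = πS.prod πT := by
    rw [hMP.map_eq, hπS, hπT]
    congr 1
    · exact congrArg Measure.pi hfamL
    · exact congrArg Measure.pi hfamR
  set Ψ : Ω → (Fin n → S) × (Fin l → T) :=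
    fun ω => (fun j => X j ω, fun i => W i ω) with hΨ
  have hΨmeas : Measurable Ψ :=
    (measurable_pi_lambda _ hXm).prodMk (measurable_pi_lambda _ hWm)
  have hbigmeas : Measurable (fun ω k => sumFun X W k ω) := measurable_pi_lambda _ hFmeas
  have hΨeq : ⇑e ∘ (fun ω k => sumFun X W k ω) = Ψ := rfl
  have hΨlaw : Measure.map Ψ ℙ = πS.prod πT := by
    have h' := Measure.map_map (μ := ℙ) e.measurable hbigmeas
    rw [hjoint, hmapE] at h'
    exact h'.symm
  -- event A
  set SA : Set (Fin n → S) := {v | (n : ℝ) * (m + ε₁) ≤ ∑ j, p (v j)} with hSA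
  have hSAmeas : MeasurableSet SA :=
    measurableSet_le measurable_const
      (Finset.measurable_sum Finset.univ fun j _ => hp_meas.comp (measurable_pi_apply j))
  set Φ : Ω → (Fin n → S) := fun ω j => X j ω with hΦ
  have hΦmeas : Measurable Φ := measurable_pi_lambda _ hXm
  have hΦeq : Φ = Prod.fst ∘ Ψ := rfl
  have hΦlaw : Measure.map Φ ℙ = πS := by
    rw [hΦeq, ← Measure.map_map measurable_fst hΨmeas, hΨlaw, Measure.map_fst_prod]
    simp
  have hPA : ℙ (Φ ⁻¹' SA) ≤ ENNReal.ofReal (Real.exp (-A)) := by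
    rw [← Measure.map_apply hΦmeas hSAmeas, hΦlaw, ← hA1]
    exact chernoff_pi μ p hp_meas hp0 hp1 n ε₁ hε₁0
  -- events B j
  set SB : Set (S × (Fin l → T)) := {q | (l : ℝ) * (p q.1 + ε₂) ≤ ∑ i, g (q.1, q.2 i)} with hSB
  have hSBmeas : MeasurableSet SB := by
    apply measurableSet_le
    · exact ((hp_meas.comp measurable_fst).add_const ε₂).const_mul _
    · exact Finset.measurable_sum Finset.univ fun i _ =>
        hg.comp (measurable_fst.prodMk ((measurable_pi_apply i).comp measurable_snd))
  set φ : Fin n → Ω → S × (Fin l → T) := fun j ω => (X j ω, fun i => W i ω) with hφ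
  have hφmeas : ∀ j, Measurable (φ j) := fun j =>
    (hXm j).prodMk (measurable_pi_lambda _ hWm)
  have hφlaw : ∀ j, Measure.map (φ j) ℙ = μ.prod πT := by
    intro j
    have heq : φ j = (Prod.map (Function.eval j) id) ∘ Ψ := rfl
    rw [heq, ← Measure.map_map ((measurable_pi_apply j).prodMap measurable_id) hΨmeas,
      hΨlaw, ← Measure.map_prod_map _ _ (measurable_pi_apply j) measurable_id,
      map_eval_pi, Measure.map_id]
  have hPB : ∀ j, ℙ (φ j ⁻¹' SB) ≤ ENNReal.ofReal (Real.exp (-A)) := by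
    intro j
    rw [← Measure.map_apply (hφmeas j) hSBmeas, hφlaw j, Measure.prod_apply hSBmeas]
    have hslice : ∀ x : S, πT (Prod.mk x ⁻¹' SB) ≤ ENNReal.ofReal (Real.exp (-A)) := by
      intro x
      have hchern := chernoff_pi ν (fun w => g (x, w)) (hg.comp measurable_prodMk_left)
        (fun w => hg0 _) (fun w => hg1 _) l ε₂ hε₂0
      rw [hA2] at hchern
      exact hchern
    calc ∫⁻ x, πT (Prod.mk x ⁻¹' SB) ∂μ ≤ ∫⁻ _, ENNReal.ofReal (Real.exp (-A)) ∂μ :=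
        lintegral_mono hslice
    _ = ENNReal.ofReal (Real.exp (-A)) := by simp
  -- event inclusion
  have hincl : {ω | (1 / ((n : ℝ) * l)) * ∑ j : Fin n, ∑ i : Fin l, g (X j ω, W i ω)
      - ∫ x, ∫ w, g (x, w) ∂ν ∂μ ≥ ε} ⊆ Φ ⁻¹' SA ∪ ⋃ j, φ j ⁻¹' SB := by
    intro ω hω
    by_contra hcon
    simp only [Set.mem_union, Set.mem_iUnion, not_or, not_exists] at hcon
    obtain ⟨hA', hB'⟩ := hcon
    simp only [Set.mem_preimage, hSA, hSB, Set.mem_setOf_eq, not_le, hΦ, hφ] at hA' hB'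
    have hω' : ε ≤ (1 / ((n : ℝ) * l)) * ∑ j : Fin n, ∑ i : Fin l, g (X j ω, W i ω) - m := hω
    have hnl : (0 : ℝ) < (n : ℝ) * l := by
      have h1 : (0:ℝ) < n := by exact_mod_cast hn
      have h2 : (0:ℝ) < l := by exact_mod_cast hl
      positivity
    have hge : (n : ℝ) * l * (m + ε) ≤ ∑ j : Fin n, ∑ i : Fin l, g (X j ω, W i ω) := by
      rw [one_div, inv_mul_eq_div] at hω'
      have := (le_div_iff₀ hnl).1 (by linarith : m + ε ≤ (∑ j : Fin n, ∑ i : Fin l, g (X j ω, W i ω)) / ((n:ℝ) * l))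
      linarith
    haveI : Nonempty (Fin n) := ⟨⟨0, hn⟩⟩
    have hlt : ∑ j : Fin n, ∑ i : Fin l, g (X j ω, W i ω)
        < ∑ j : Fin n, (l : ℝ) * (p (X j ω) + ε₂) := by
      apply Finset.sum_lt_sum_of_nonempty Finset.univ_nonempty
      intro j _
      exact hB' j
    have hsum2 : ∑ j : Fin n, (l : ℝ) * (p (X j ω) + ε₂)
        = (l : ℝ) * (∑ j, p (X j ω)) + (n : ℝ) * ((l : ℝ) * ε₂) := by
      calc ∑ j : Fin n, (l : ℝ) * (p (X j ω) + ε₂)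
          = ∑ j : Fin n, ((l : ℝ) * p (X j ω) + (l : ℝ) * ε₂) :=
            Finset.sum_congr rfl fun j _ => by ring
      _ = (l : ℝ) * (∑ j, p (X j ω)) + (n : ℝ) * ((l : ℝ) * ε₂) := by
          rw [Finset.sum_add_distrib, ← Finset.mul_sum, Finset.sum_const, Finset.card_univ,
            Fintype.card_fin, nsmul_eq_mul]
    have h3 : ∑ j, p (X j ω) < (n : ℝ) * (m + ε₁) := hA'
    have hl0 : (0:ℝ) < l := by exact_mod_cast hl
    have hfin : ∑ j : Fin n, ∑ i : Fin l, g (X j ω, W i ω) < (n : ℝ) * l * (m + ε) := by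
      have h4 : ∑ j : Fin n, ∑ i : Fin l, g (X j ω, W i ω)
          < (l : ℝ) * (∑ j, p (X j ω)) + (n : ℝ) * ((l : ℝ) * ε₂) := by
        rw [← hsum2]; exact hlt
      nlinarith [hεsum]
    linarith
  -- final combination
  calc ℙ {ω | (1 / ((n : ℝ) * l)) * ∑ j : Fin n, ∑ i : Fin l, g (X j ω, W i ω)
      - ∫ x, ∫ w, g (x, w) ∂ν ∂μ ≥ ε}
      ≤ ℙ (Φ ⁻¹' SA ∪ ⋃ j, φ j ⁻¹' SB) := measure_mono hincl
    _ ≤ ℙ (Φ ⁻¹' SA) + ℙ (⋃ j, φ j ⁻¹' SB) := measure_union_le _ _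
    _ ≤ ℙ (Φ ⁻¹' SA) + ∑ j : Fin n, ℙ (φ j ⁻¹' SB) := by
        gcongr
        exact measure_iUnion_fintype_le _ _
    _ ≤ ENNReal.ofReal (Real.exp (-A)) + ∑ j : Fin n, ENNReal.ofReal (Real.exp (-A)) :=
        add_le_add hPA (Finset.sum_le_sum fun j _ => hPB j)
    _ = (1 + (n : ENNReal)) * ENNReal.ofReal (Real.exp (-A)) := by
        rw [Finset.sum_const, Finset.card_univ, Fintype.card_fin, nsmul_eq_mul]
        ring
    _ = ENNReal.ofReal (((n : ℝ) + 1) * Real.exp (-A)) := by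
        rw [ENNReal.ofReal_mul (by positivity)]
        congr 1
        rw [show ((n : ℝ) + 1) = ((n + 1 : ℕ) : ℝ) by push_cast; ring,
          ENNReal.ofReal_natCast]
        push_cast
        ring
end

section
/- Let (Ω, 𝒫) be a probability space, let S and T be measurable spaces, and let g : S × T → ℝ be a measurable function taking values in {0,1}. Let X₁, …, Xₙ be i.i.d. S-valued random variables with common law μ, let W₁, …, W_l be i.i.d. T-valued random variables with common law ν, and suppose the whole family (X₁,…,Xₙ, W₁,…,W_l) is jointly independent. Then for every ε > 0 and every α ∈ (0,1), 𝒫( (1/(n·l)) · Σ_{j=1}^{n} Σ_{i=1}^{l} g(X_j, W_i) − ∫_S ∫_T g(x,w) dν(w) dμ(x) ≥ ε ) ≤ n · exp( − l α² ε² ) + exp( − n (1−α)² ε² ). -/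
open MeasureTheory ProbabilityTheory

universe u

open Real

lemma keyIneq (p t : ℝ) (hp0 : 0 ≤ p) (hp1 : p ≤ 1) :
    1 + (Real.exp t - 1) * p ≤ Real.exp (t * p + t ^ 2 / 4) := by
  set h : ℝ → ℝ := fun s => 1 - p + p * Real.exp s with hh
  have hpos : ∀ s, 0 < h s := by
    intro s
    rcases eq_or_lt_of_le hp1 with rfl | hlt
    · simp [hh, exp_pos s]
    · have := mul_nonneg hp0 (exp_pos s).le
      simp only [hh]; linarith
  set f1 : ℝ → ℝ := fun s => p * Real.exp s / h s - p with hf1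
  set f2 : ℝ → ℝ := fun s => p * Real.exp s * (1 - p) / (h s) ^ 2 with hf2
  have hderh : ∀ s, HasDerivAt h (p * Real.exp s) s := by
    intro s
    rw [hh]; exact ((Real.hasDerivAt_exp s).const_mul p).const_add (1 - p)
  have hder1 : ∀ s, HasDerivAt (fun s => Real.log (h s) - p * s) (f1 s) s := by
    intro s
    have h1 : HasDerivAt (fun s => Real.log (h s)) (p * Real.exp s / h s) s :=
      (hderh s).log (hpos s).ne'
    have h2 : HasDerivAt (fun s : ℝ => p * s) p s := by
      simpa using (hasDerivAt_id s).const_mul p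
    exact h1.sub h2
  have hder2 : ∀ s, HasDerivAt f1 (f2 s) s := by
    intro s
    have h1 : HasDerivAt (fun s => p * Real.exp s) (p * Real.exp s) s := by
      simpa using (Real.hasDerivAt_exp s).const_mul p
    have h3 := (h1.div (hderh s) (hpos s).ne').sub_const p
    have : (p * Real.exp s * h s - p * Real.exp s * (p * Real.exp s)) / h s ^ 2 = f2 s := by
      simp only [hf2, hh]; ring
    simpa [hf1, this] using h3
  have hf2b : ∀ s, |f2 s| ≤ 1 / 4 := by
    intro s
    set q : ℝ := p * Real.exp s / h s with hq
    have hq0 : 0 ≤ q := div_nonneg (mul_nonneg hp0 (exp_pos s).le) (hpos s).le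
    have hq1 : q ≤ 1 := by
      rw [hq, div_le_one (hpos s)]
      simp only [hh]; nlinarith [exp_pos s]
    have h1q : 1 - q = (1 - p) / h s := by
      rw [hq, eq_div_iff (hpos s).ne', sub_mul, div_mul_cancel₀ _ (hpos s).ne']
      simp only [hh]; ring
    have hfq : f2 s = q * (1 - q) := by
      rw [h1q, hq, div_mul_div_comm, ← sq, hf2]
    rw [hfq, abs_of_nonneg (by nlinarith)]
    nlinarith [sq_nonneg (q - 1 / 2)]
  have hf1b : ∀ s, |f1 s| ≤ |s| / 4 := by
    intro s
    have h10 : f1 0 = 0 := by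
      simp [hf1, hh]
    have := Convex.norm_image_sub_le_of_norm_hasDerivWithin_le
      (f := f1) (f' := f2) (s := Set.univ) (C := 1 / 4)
      (fun x _ => (hder2 x).hasDerivWithinAt) (fun x _ => by simpa using hf2b x)
      convex_univ (Set.mem_univ 0) (Set.mem_univ s)
    rw [h10, sub_zero, Real.norm_eq_abs, Real.norm_eq_abs, sub_zero] at this
    linarith
  have habs : ∀ x ∈ Set.uIcc (0 : ℝ) t, |x| ≤ |t| := by
    intro x hx
    rcases le_total (0 : ℝ) t with h | h
    · rw [Set.uIcc_of_le h] at hx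
      rw [abs_of_nonneg hx.1, abs_of_nonneg h]; exact hx.2
    · rw [Set.uIcc_of_ge h] at hx
      rw [abs_of_nonpos (hx.2.trans (le_refl 0) |>.trans (le_refl 0)), abs_of_nonpos h]
      linarith [hx.1]
  have hmvt := Convex.norm_image_sub_le_of_norm_hasDerivWithin_le
      (f := fun s => Real.log (h s) - p * s) (f' := f1) (s := Set.uIcc (0 : ℝ) t) (C := |t| / 4)
      (fun x _ => (hder1 x).hasDerivWithinAt)
      (fun x hx => by
        rw [Real.norm_eq_abs]
        exact (hf1b x).trans (by have := habs x hx; linarith))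
      (convex_uIcc _ _) Set.left_mem_uIcc Set.right_mem_uIcc
  have h00 : (fun s => Real.log (h s) - p * s) 0 = 0 := by simp [hh]
  have h0t : (fun s => Real.log (h s) - p * s) t = Real.log (h t) - p * t := rfl
  rw [show Real.log (h 0) - p * 0 = 0 from h00, sub_zero, Real.norm_eq_abs, Real.norm_eq_abs, sub_zero] at hmvt
  have hlog : Real.log (h t) - p * t ≤ t ^ 2 / 4 := by
    have h1 : |Real.log (h t) - p * t| ≤ |t| / 4 * |t| := hmvt
    have h2 : |t| / 4 * |t| = t ^ 2 / 4 := by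
      rw [div_mul_eq_mul_div, abs_mul_abs_self]; ring
    calc Real.log (h t) - p * t ≤ |Real.log (h t) - p * t| := le_abs_self _
    _ ≤ t ^ 2 / 4 := by rw [← h2]; exact h1
  have : h t ≤ Real.exp (t * p + t ^ 2 / 4) := by
    calc h t = Real.exp (Real.log (h t)) := (Real.exp_log (hpos t)).symm
    _ ≤ Real.exp (t * p + t ^ 2 / 4) := by
        apply Real.exp_le_exp.mpr; linarith
  calc 1 + (Real.exp t - 1) * p = h t := by simp only [hh]; ring
  _ ≤ _ := this

lemma chordIneq {y : ℝ} (t : ℝ) (h0 : 0 ≤ y) (h1 : y ≤ 1) :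
    Real.exp (t * y) ≤ 1 + (Real.exp t - 1) * y := by
  have := convexOn_exp.2 (Set.mem_univ (0 : ℝ)) (Set.mem_univ t)
    (by linarith : (0:ℝ) ≤ 1 - y) h0 (by ring)
  simp only [smul_eq_mul, mul_zero, zero_add, Real.exp_zero, mul_one] at this
  calc Real.exp (t * y) = Real.exp (y * t) := by rw [mul_comm]
  _ ≤ (1 - y) * 1 + y * Real.exp t := by simpa using this
  _ = 1 + (Real.exp t - 1) * y := by ring

lemma integrable_of_Icc {A : Type*} [MeasurableSpace A] {P : Measure A} [IsProbabilityMeasure P]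
    {Z : A → ℝ} (hm : Measurable Z) (h01 : ∀ a, Z a ∈ Set.Icc (0 : ℝ) 1) : Integrable Z P :=
  (integrable_const (1 : ℝ)).mono' hm.aestronglyMeasurable
    (Filter.Eventually.of_forall fun a => by
      rw [Real.norm_eq_abs, abs_of_nonneg (h01 a).1]; exact (h01 a).2)

lemma integral_mem_Icc {A : Type*} [MeasurableSpace A] {P : Measure A} [IsProbabilityMeasure P]
    {Z : A → ℝ} (hm : Measurable Z) (h01 : ∀ a, Z a ∈ Set.Icc (0 : ℝ) 1) :
    (∫ a, Z a ∂P) ∈ Set.Icc (0 : ℝ) 1 := by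
  constructor
  · exact integral_nonneg fun a => (h01 a).1
  · calc (∫ a, Z a ∂P) ≤ ∫ _, (1 : ℝ) ∂P :=
      integral_mono (integrable_of_Icc hm h01) (integrable_const 1) fun a => (h01 a).2
    _ = 1 := by simp

lemma mgf_le_of_Icc {A : Type*} [MeasurableSpace A] {P : Measure A} [IsProbabilityMeasure P]
    {Z : A → ℝ} (hm : Measurable Z) (h01 : ∀ a, Z a ∈ Set.Icc (0 : ℝ) 1) (t : ℝ) :
    mgf Z P t ≤ Real.exp (t * (∫ a, Z a ∂P) + t ^ 2 / 4) := by
  have hZint : Integrable Z P := integrable_of_Icc hm h01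
  have hint : Integrable (fun a => Real.exp (t * Z a)) P := by
    refine (integrable_const (1 + |Real.exp t - 1|)).mono'
      ((hm.const_mul t).exp).aestronglyMeasurable (Filter.Eventually.of_forall fun a => ?_)
    rw [Real.norm_eq_abs, abs_of_nonneg (Real.exp_nonneg _)]
    calc Real.exp (t * Z a) ≤ 1 + (Real.exp t - 1) * Z a := chordIneq t (h01 a).1 (h01 a).2
    _ ≤ 1 + |Real.exp t - 1| := by
        have : (Real.exp t - 1) * Z a ≤ |Real.exp t - 1| := by
          calc (Real.exp t - 1) * Z a ≤ |(Real.exp t - 1) * Z a| := le_abs_self _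
          _ = |Real.exp t - 1| * |Z a| := abs_mul _ _
          _ ≤ |Real.exp t - 1| * 1 := by
              apply mul_le_mul_of_nonneg_left _ (abs_nonneg _)
              rw [abs_of_nonneg (h01 a).1]; exact (h01 a).2
          _ = |Real.exp t - 1| := mul_one _
        linarith
  calc mgf Z P t = ∫ a, Real.exp (t * Z a) ∂P := rfl
  _ ≤ ∫ a, (1 + (Real.exp t - 1) * Z a) ∂P := by
      refine integral_mono hint ((integrable_const 1).add (hZint.const_mul _)) fun a => ?_
      exact chordIneq t (h01 a).1 (h01 a).2
  _ = 1 + (Real.exp t - 1) * ∫ a, Z a ∂P := by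
      rw [integral_add (integrable_const 1) (hZint.const_mul _), integral_const,
        integral_const_mul]
      simp
  _ ≤ Real.exp (t * (∫ a, Z a ∂P) + t ^ 2 / 4) :=
      keyIneq _ t (integral_mem_Icc hm h01).1 (integral_mem_Icc hm h01).2

lemma chernoff {A : Type*} [MeasurableSpace A] {P : Measure A} [IsProbabilityMeasure P]
    {k : ℕ} (Z : Fin k → A → ℝ) (hZm : ∀ i, Measurable (Z i))
    (hZ01 : ∀ i a, Z i a ∈ Set.Icc (0 : ℝ) 1)
    (hind : iIndepFun (m := fun _ => inferInstance) Z P) {δ : ℝ} (hδ : 0 < δ) :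
    P {a | (∑ i, ∫ x, Z i x ∂P) + k * δ ≤ ∑ i, Z i a} ≤
      ENNReal.ofReal (Real.exp (-(k * δ ^ 2))) := by
  set t : ℝ := 2 * δ with ht
  have ht0 : 0 ≤ t := by positivity
  set C : ℝ := ∑ i, ∫ x, Z i x ∂P with hC
  have hSm : Measurable (∑ i, Z i) := by
    have : ∀ a, (∑ i, Z i) a = ∑ i, Z i a := fun a => by simp
    simp only [funext this]
    exact Finset.measurable_sum _ fun i _ => hZm i
  have hsum_apply : ∀ a, (∑ i, Z i) a = ∑ i, Z i a := fun a => by simp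
  have hint : Integrable (fun a => Real.exp (t * (∑ i, Z i) a)) P := by
    refine (integrable_const (Real.exp (t * k))).mono'
      ((hSm.const_mul t).exp).aestronglyMeasurable (Filter.Eventually.of_forall fun a => ?_)
    rw [Real.norm_eq_abs, abs_of_nonneg (Real.exp_nonneg _), Real.exp_le_exp]
    apply mul_le_mul_of_nonneg_left _ ht0
    rw [hsum_apply]
    calc ∑ i, Z i a ≤ ∑ _i : Fin k, (1 : ℝ) := Finset.sum_le_sum fun i _ => (hZ01 i a).2
    _ = k := by simp
  have hset : {a | C + k * δ ≤ ∑ i, Z i a} = {a | C + k * δ ≤ (∑ i, Z i) a} := by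
    ext a; simp [hsum_apply]
  have hchern := measure_ge_le_exp_mul_mgf (X := ∑ i, Z i) (μ := P) (C + k * δ) ht0 hint
  have hmgf : mgf (∑ i, Z i) P t ≤ Real.exp (t * C + k * (t ^ 2 / 4)) := by
    calc mgf (∑ i, Z i) P t = ∏ i, mgf (Z i) P t := hind.mgf_sum hZm Finset.univ
    _ ≤ ∏ i, Real.exp (t * (∫ x, Z i x ∂P) + t ^ 2 / 4) := by
        refine Finset.prod_le_prod (fun i _ => mgf_nonneg) fun i _ => ?_
        exact mgf_le_of_Icc (hZm i) (hZ01 i) t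
    _ = Real.exp (∑ i, (t * (∫ x, Z i x ∂P) + t ^ 2 / 4)) := (Real.exp_sum _ _).symm
    _ = Real.exp (t * C + k * (t ^ 2 / 4)) := by
        rw [Finset.sum_add_distrib, ← Finset.mul_sum, ← hC, Finset.sum_const]
        simp [nsmul_eq_mul]
  have hfinal : Real.exp (-t * (C + k * δ)) * mgf (∑ i, Z i) P t ≤
      Real.exp (-(k * δ ^ 2)) := by
    calc Real.exp (-t * (C + k * δ)) * mgf (∑ i, Z i) P t
        ≤ Real.exp (-t * (C + k * δ)) * Real.exp (t * C + k * (t ^ 2 / 4)) := by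
          exact mul_le_mul_of_nonneg_left hmgf (Real.exp_nonneg _)
    _ = Real.exp (-t * (C + k * δ) + (t * C + k * (t ^ 2 / 4))) := (Real.exp_add _ _).symm
    _ = Real.exp (-(k * δ ^ 2)) := by rw [ht]; ring_nf
  rw [hset]
  rw [ENNReal.le_ofReal_iff_toReal_le (measure_ne_top P _) (Real.exp_nonneg _)]
  exact hchern.trans hfinal

lemma pi_eval_indep {T : Type*} [mT : MeasurableSpace T] (ν : Measure T) [IsProbabilityMeasure ν]
    (l : ℕ) :
    iIndepFun (m := fun _ : Fin l => mT) (fun i (w : Fin l → T) => w i)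
      (Measure.pi fun _ : Fin l => ν) := by
  rw [iIndepFun_iff_measure_inter_preimage_eq_mul]
  intro S sets hS
  classical
  have h1 : (⋂ i ∈ S, (fun w : Fin l → T => w i) ⁻¹' sets i) =
      Set.pi Set.univ (fun i => if i ∈ S then sets i else Set.univ) := by
    ext w
    simp only [Set.mem_iInter, Set.mem_preimage, Set.mem_pi, Set.mem_univ, true_imp_iff]
    constructor
    · intro h i
      by_cases hi : i ∈ S <;> simp [hi, h]
    · intro h i hi
      have := h i; rw [if_pos hi] at this; exact this
  rw [h1, Measure.pi_pi]
  have h2 : ∀ i, (Measure.pi fun _ : Fin l => ν) ((fun w : Fin l → T => w i) ⁻¹' sets i) =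
      ν (sets i) ∨ i ∉ S := by
    intro i
    by_cases hi : i ∈ S
    · left
      have : (fun w : Fin l → T => w i) ⁻¹' sets i =
          Set.pi Set.univ (Function.update (fun _ => Set.univ) i (sets i)) := by
        rw [← Set.eval_preimage]
      rw [this, Measure.pi_pi]
      rw [Finset.prod_eq_single i]
      · simp
      · intro j _ hj; simp [Function.update_of_ne hj]
      · simp
    · right; exact hi
  calc (∏ i, ν (if i ∈ S then sets i else Set.univ))
      = ∏ i ∈ S, ν (sets i) := by
        simp only [apply_ite ν, measure_univ]
        rw [Finset.prod_ite_mem Finset.univ S, Finset.univ_inter]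
  _ = ∏ i ∈ S, (Measure.pi fun _ : Fin l => ν) ((fun w : Fin l → T => w i) ⁻¹' sets i) := by
        refine Finset.prod_congr rfl fun i hi => ?_
        rcases h2 i with h | h
        · exact h.symm
        · exact absurd hi h

lemma iIndepFun_left {Ω : Type*} {S T : Type u} [MeasurableSpace Ω] {P : Measure Ω}
    {ι κ : Type*} {mS : MeasurableSpace S} {mT : MeasurableSpace T}
    {X : ι → Ω → S} {W : κ → Ω → T}
    (h : iIndepFun (m := sumMS mS mT) (sumFun X W) P) : iIndepFun (m := fun _ : ι => mS) X P := by
  classical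
  rw [iIndepFun_iff_measure_inter_preimage_eq_mul] at h ⊢
  intro S' sets hset
  let sets' : ∀ k : ι ⊕ κ, Set (sumType S T k) := fun k =>
    match k with | .inl j => sets j | .inr _ => Set.univ
  have hmeas : ∀ k ∈ S'.image Sum.inl, MeasurableSet[sumMS mS mT k] (sets' k) := by
    rintro (j | i) hk
    · exact hset j (by simpa using hk)
    · exact MeasurableSet.univ
  have key := h (S'.image Sum.inl) hmeas
  have e1 : (⋂ k ∈ S'.image Sum.inl, sumFun X W k ⁻¹' sets' k) = ⋂ j ∈ S', X j ⁻¹' sets j := by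
    ext ω
    simp only [Set.mem_iInter, Finset.mem_image]
    constructor
    · intro H j hj
      exact H (Sum.inl j) ⟨j, hj, rfl⟩
    · rintro H k ⟨j, hj, rfl⟩
      exact H j hj
  have e2 : (∏ k ∈ S'.image Sum.inl, P (sumFun X W k ⁻¹' sets' k)) =
      ∏ j ∈ S', P (X j ⁻¹' sets j) := by
    rw [Finset.prod_image (fun a _ b _ hab => Sum.inl_injective hab)]
    exact Finset.prod_congr rfl fun x _ => rfl
  rw [e1, e2] at key
  exact key

lemma iIndepFun_right {Ω : Type*} {S T : Type u} [MeasurableSpace Ω] {P : Measure Ω}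
    {ι κ : Type*} {mS : MeasurableSpace S} {mT : MeasurableSpace T}
    {X : ι → Ω → S} {W : κ → Ω → T}
    (h : iIndepFun (m := sumMS mS mT) (sumFun X W) P) : iIndepFun (m := fun _ : κ => mT) W P := by
  classical
  rw [iIndepFun_iff_measure_inter_preimage_eq_mul] at h ⊢
  intro S' sets hset
  let sets' : ∀ k : ι ⊕ κ, Set (sumType S T k) := fun k =>
    match k with | .inl _ => Set.univ | .inr i => sets i
  have hmeas : ∀ k ∈ S'.image Sum.inr, MeasurableSet[sumMS mS mT k] (sets' k) := by
    rintro (j | i) hk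
    · exact MeasurableSet.univ
    · exact hset i (by simpa using hk)
  have key := h (S'.image Sum.inr) hmeas
  have e1 : (⋂ k ∈ S'.image Sum.inr, sumFun X W k ⁻¹' sets' k) = ⋂ i ∈ S', W i ⁻¹' sets i := by
    ext ω
    simp only [Set.mem_iInter, Finset.mem_image]
    constructor
    · intro H i hi
      exact H (Sum.inr i) ⟨i, hi, rfl⟩
    · rintro H k ⟨i, hi, rfl⟩
      exact H i hi
  have e2 : (∏ k ∈ S'.image Sum.inr, P (sumFun X W k ⁻¹' sets' k)) =
      ∏ i ∈ S', P (W i ⁻¹' sets i) := by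
    rw [Finset.prod_image (fun a _ b _ hab => Sum.inr_injective hab)]
    exact Finset.prod_congr rfl fun x _ => rfl
  rw [e1, e2] at key
  exact key

lemma map_eval {T : Type*} [mT : MeasurableSpace T] (ν : Measure T) [IsProbabilityMeasure ν]
    {l : ℕ} (i : Fin l) :
    Measure.map (fun w : Fin l → T => w i) (Measure.pi fun _ : Fin l => ν) = ν := by
  classical
  ext s hs
  rw [Measure.map_apply (measurable_pi_apply i) hs]
  have h1 : (fun w : Fin l → T => w i) ⁻¹' s =
      Set.univ.pi (Function.update (fun _ => Set.univ) i s) := by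
    rw [← Set.eval_preimage]
  rw [h1, Measure.pi_pi, Finset.prod_eq_single i]
  · simp
  · intro j _ hj; simp [Function.update_of_ne hj]
  · simp


/-- **Intermediate bound in the proof of Proposition 1.** For every `ε > 0` and every splitting
parameter `α ∈ (0,1)`, the probability that the empirical double average exceeds the expected
value `∫∫ g dν dμ` by at least `ε` is at most `n·exp(−lα²ε²) + exp(−n(1−α)²ε²)`. -/
theorem stmt3 {Ω : Type*} {S T : Type u} [MeasureSpace Ω]
    [IsProbabilityMeasure (ℙ : Measure Ω)]
    [mS : MeasurableSpace S] [mT : MeasurableSpace T]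
    (μ : Measure S) (ν : Measure T)
    (g : S × T → ℝ) (hg : Measurable g) (hg01 : ∀ p, g p = 0 ∨ g p = 1)
    (n l : ℕ) (hn : 0 < n) (hl : 0 < l)
    (X : Fin n → Ω → S) (W : Fin l → Ω → T)
    (hXm : ∀ j, Measurable (X j)) (hWm : ∀ i, Measurable (W i))
    (hXlaw : ∀ j, Measure.map (X j) ℙ = μ)
    (hWlaw : ∀ i, Measure.map (W i) ℙ = ν)
    (hindep : iIndepFun (m := sumMS mS mT) (sumFun X W) ℙ)
    (ε : ℝ) (hε : 0 < ε) (α : ℝ) (hα : α ∈ Set.Ioo (0 : ℝ) 1) :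
    ℙ {ω | (1 / ((n : ℝ) * l)) * ∑ j : Fin n, ∑ i : Fin l, g (X j ω, W i ω)
        - ∫ x, ∫ w, g (x, w) ∂ν ∂μ ≥ ε}
      ≤ ENNReal.ofReal
          ((n : ℝ) * Real.exp (-((l : ℝ) * α ^ 2 * ε ^ 2))
            + Real.exp (-((n : ℝ) * (1 - α) ^ 2 * ε ^ 2))) := by
  classical
  letI : ∀ k : Fin n ⊕ Fin l, MeasurableSpace (sumType S T k) := sumMS mS mT
  obtain ⟨hα0, hα1⟩ := hα
  haveI hμP : IsProbabilityMeasure μ := by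
    rw [← hXlaw ⟨0, hn⟩]; exact Measure.isProbabilityMeasure_map (hXm _).aemeasurable
  haveI hνP : IsProbabilityMeasure ν := by
    rw [← hWlaw ⟨0, hl⟩]; exact Measure.isProbabilityMeasure_map (hWm _).aemeasurable
  have hg0 : ∀ p, 0 ≤ g p := fun p => by rcases hg01 p with h | h <;> simp [h]
  have hg1 : ∀ p, g p ≤ 1 := fun p => by rcases hg01 p with h | h <;> simp [h]
  set δA : ℝ := α * ε with hδA
  set δB : ℝ := (1 - α) * ε with hδB
  have hδA0 : 0 < δA := mul_pos hα0 hε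
  have hδB0 : 0 < δB := mul_pos (by linarith) hε
  set G : S → ℝ := fun x => ∫ w, g (x, w) ∂ν with hGdef
  have hGm : Measurable G := hg.stronglyMeasurable.integral_prod_right'.measurable
  have hgxint : ∀ x, Integrable (fun w => g (x, w)) ν := fun x =>
    (integrable_const (1 : ℝ)).mono' (hg.comp measurable_prodMk_left).aestronglyMeasurable
      (Filter.Eventually.of_forall fun w => by
        rw [Real.norm_eq_abs, abs_of_nonneg (hg0 _)]; exact hg1 _)
  have hGmem : ∀ x, G x ∈ Set.Icc (0 : ℝ) 1 := by
    intro x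
    constructor
    · exact integral_nonneg fun w => hg0 _
    · calc G x ≤ ∫ _, (1 : ℝ) ∂ν :=
        integral_mono (hgxint x) (integrable_const 1) fun w => hg1 _
      _ = 1 := by simp
  set I : ℝ := ∫ x, ∫ w, g (x, w) ∂ν ∂μ with hIdef
  have hIG : I = ∫ x, G x ∂μ := rfl
  set Wv : Ω → (Fin l → T) := fun ω i => W i ω with hWv
  have hWvm : Measurable Wv := measurable_pi_lambda _ hWm
  set piν : Measure (Fin l → T) := Measure.pi (fun _ : Fin l => ν) with hpiν
  haveI : IsProbabilityMeasure piν := by rw [hpiν]; infer_instance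
  -- integral of coordinate
  have heval : ∀ (x : S) (i : Fin l), (∫ w, g (x, w i) ∂piν) = G x := by
    intro x i
    have : (∫ y, g (x, y) ∂ν) = ∫ w, g (x, w i) ∂piν := by
      rw [← map_eval ν i, integral_map (measurable_pi_apply i).aemeasurable
        (hg.comp measurable_prodMk_left).aestronglyMeasurable]
    exact this.symm
  -- the bad sets
  set E' : Set (S × (Fin l → T)) :=
    {p | (l : ℝ) * G p.1 + l * δA ≤ ∑ i, g (p.1, p.2 i)} with hE'
  have hE'm : MeasurableSet E' := by
    apply measurableSet_le
    · exact ((hGm.comp measurable_fst).const_mul _).add_const _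
    · exact Finset.measurable_sum _ fun i _ =>
        hg.comp (measurable_fst.prodMk ((measurable_pi_apply i).comp measurable_snd))
  -- slice bound
  have hslice : ∀ x : S,
      piν {w | (l : ℝ) * G x + l * δA ≤ ∑ i, g (x, w i)} ≤
        ENNReal.ofReal (Real.exp (-(l * δA ^ 2))) := by
    intro x
    have hZm : ∀ i : Fin l, Measurable (fun w : Fin l → T => g (x, w i)) := fun i =>
      hg.comp (measurable_const.prodMk (measurable_pi_apply i))
    have hZ01 : ∀ (i : Fin l) (w : Fin l → T), g (x, w i) ∈ Set.Icc (0 : ℝ) 1 :=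
      fun i w => ⟨hg0 _, hg1 _⟩
    have hind : iIndepFun (m := fun _ : Fin l => inferInstance)
        (fun i (w : Fin l → T) => g (x, w i)) piν := by
      have := (pi_eval_indep ν l).comp (fun _ => fun y => g (x, y))
        (fun _ => hg.comp measurable_prodMk_left)
      exact this
    have h := chernoff (P := piν) (Z := fun i (w : Fin l → T) => g (x, w i)) hZm hZ01 hind hδA0
    have hsum : (∑ i : Fin l, ∫ w, g (x, w i) ∂piν) = (l : ℝ) * G x := by
      simp [heval x, Finset.sum_const]
    have hEq : {w : Fin l → T | (l : ℝ) * G x + l * δA ≤ ∑ i, g (x, w i)} =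
        {a : Fin l → T | (∑ i : Fin l, ∫ w, g (x, w i) ∂piν) + l * δA ≤ ∑ i, g (x, a i)} := by
      rw [hsum]
    rw [hEq]
    exact h
  -- joint law
  have hWind : iIndepFun (m := fun _ : Fin l => mT) W ℙ := iIndepFun_right hindep
  have lawW : Measure.map Wv ℙ = piν := by
    refine (Measure.pi_eq fun s hs => ?_).symm
    rw [Measure.map_apply hWvm (MeasurableSet.univ_pi hs)]
    have h1 : Wv ⁻¹' Set.univ.pi s = ⋂ i ∈ Finset.univ, W i ⁻¹' s i := by
      ext ω; simp [hWv, Set.mem_univ_pi]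
    rw [h1, (iIndepFun_iff_measure_inter_preimage_eq_mul.mp hWind) Finset.univ
      (fun i _ => hs i)]
    refine Finset.prod_congr rfl fun i _ => ?_
    rw [← Measure.map_apply (hWm i) (hs i), hWlaw i]
  have hmeasAll : ∀ k : Fin n ⊕ Fin l, Measurable (sumFun X W k) := by
    rintro (j | i)
    · exact hXm j
    · exact hWm i
  have hlawj : ∀ j : Fin n,
      Measure.map (fun ω => (X j ω, Wv ω)) ℙ = μ.prod piν := by
    intro j
    have hdisj : Disjoint ({Sum.inl j} : Finset (Fin n ⊕ Fin l))
        (Finset.univ.image Sum.inr) := by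
      simp [Finset.disjoint_left]
    have hfin := hindep.indepFun_finset {Sum.inl j} (Finset.univ.image Sum.inr) hdisj hmeasAll
    have hφ : Measurable (fun v : (∀ k : ({Sum.inl j} : Finset (Fin n ⊕ Fin l)), sumType S T k.1)
        => v ⟨Sum.inl j, Finset.mem_singleton_self _⟩) := measurable_pi_apply _
    have hψ : Measurable (fun (v : ∀ k : (Finset.univ.image (Sum.inr : Fin l → Fin n ⊕ Fin l) :
        Finset (Fin n ⊕ Fin l)), sumType S T k.1) (i : Fin l) =>
          v ⟨Sum.inr i, Finset.mem_image_of_mem _ (Finset.mem_univ i)⟩) :=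
      measurable_pi_lambda _ fun i => measurable_pi_apply _
    have hXW : IndepFun (X j) Wv ℙ := hfin.comp hφ hψ
    rw [(indepFun_iff_map_prod_eq_prod_map_map (hXm j).aemeasurable hWvm.aemeasurable).mp hXW,
      hXlaw j, lawW]
  -- bound on each E_j
  have hEj : ∀ j : Fin n, ℙ ((fun ω => (X j ω, Wv ω)) ⁻¹' E') ≤
      ENNReal.ofReal (Real.exp (-(l * δA ^ 2))) := by
    intro j
    rw [← Measure.map_apply ((hXm j).prodMk hWvm) hE'm, hlawj j, Measure.prod_apply hE'm]
    calc ∫⁻ x, piν (Prod.mk x ⁻¹' E') ∂μ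
        ≤ ∫⁻ _, ENNReal.ofReal (Real.exp (-(l * δA ^ 2))) ∂μ := by
          refine lintegral_mono fun x => ?_
          exact hslice x
    _ = ENNReal.ofReal (Real.exp (-(l * δA ^ 2))) := by simp
  -- term B
  have hBind : iIndepFun (m := fun _ : Fin n => inferInstance) (fun j ω => G (X j ω)) ℙ := by
    have := (iIndepFun_left hindep).comp (fun _ => G) (fun _ => hGm)
    exact this
  have hGint : ∀ j, (∫ ω, G (X j ω) ∂ℙ) = ∫ x, G x ∂μ := fun j => by
    rw [← hXlaw j, integral_map (hXm j).aemeasurable hGm.aestronglyMeasurable]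
  have hF := chernoff (P := ℙ) (Z := fun j ω => G (X j ω))
    (fun j => hGm.comp (hXm j)) (fun j ω => hGmem _) hBind hδB0
  have hsumI : (∑ j : Fin n, ∫ ω, G (X j ω) ∂ℙ) = (n : ℝ) * I := by
    simp only [hGint, Finset.sum_const, Finset.card_univ, Fintype.card_fin, nsmul_eq_mul, hIG]
  set F : Set Ω := {ω | (n : ℝ) * I + n * δB ≤ ∑ j, G (X j ω)} with hFdef
  have hFbound : ℙ F ≤ ENNReal.ofReal (Real.exp (-(n * δB ^ 2))) := by
    have hEq : F = {ω | (∑ j : Fin n, ∫ ω', G (X j ω') ∂ℙ) + n * δB ≤ ∑ j, G (X j ω)} := by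
      rw [hFdef, hsumI]
    rw [hEq]
    exact hF
  -- inclusion
  have hsub : {ω | (1 / ((n : ℝ) * l)) * ∑ j : Fin n, ∑ i : Fin l, g (X j ω, W i ω)
        - I ≥ ε} ⊆ (⋃ j, (fun ω => (X j ω, Wv ω)) ⁻¹' E') ∪ F := by
    intro ω hω
    by_contra hcon
    rw [Set.mem_union] at hcon
    push_neg at hcon
    obtain ⟨h1, h2⟩ := hcon
    simp only [Set.mem_iUnion, not_exists, Set.mem_preimage] at h1
    have h1' : ∀ j : Fin n, (∑ i, g (X j ω, W i ω)) < (l : ℝ) * G (X j ω) + l * δA := by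
      intro j
      have := h1 j
      rw [hE'] at this
      simp only [Set.mem_setOf_eq, not_le] at this
      exact this
    have h2' : (∑ j, G (X j ω)) < (n : ℝ) * I + n * δB := by
      rw [hFdef] at h2
      simp only [Set.mem_setOf_eq, not_le] at h2
      exact h2
    have hn' : (0 : ℝ) < n := by exact_mod_cast hn
    have hl' : (0 : ℝ) < l := by exact_mod_cast hl
    have hNE : (Finset.univ : Finset (Fin n)).Nonempty := ⟨⟨0, hn⟩, Finset.mem_univ _⟩
    have hstep : (∑ j : Fin n, ∑ i : Fin l, g (X j ω, W i ω)) <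
        (l : ℝ) * (∑ j, G (X j ω)) + n * (l * δA) := by
      calc (∑ j : Fin n, ∑ i : Fin l, g (X j ω, W i ω))
          < ∑ j : Fin n, ((l : ℝ) * G (X j ω) + l * δA) :=
            Finset.sum_lt_sum_of_nonempty hNE fun j _ => h1' j
      _ = (l : ℝ) * (∑ j, G (X j ω)) + n * (l * δA) := by
          rw [Finset.sum_add_distrib, ← Finset.mul_sum, Finset.sum_const]
          simp [nsmul_eq_mul]
    have hSS : (∑ j : Fin n, ∑ i : Fin l, g (X j ω, W i ω)) < (n : ℝ) * l * (I + ε) := by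
      have hmul := mul_lt_mul_of_pos_left h2' hl'
      have hde : δA + δB = ε := by rw [hδA, hδB]; ring
      have hid : (l : ℝ) * ((n : ℝ) * I + n * δB) + n * (l * δA) = (n : ℝ) * l * (I + ε) := by
        rw [← hde]; ring
      linarith
    have hεlt : (1 / ((n : ℝ) * l)) * ∑ j : Fin n, ∑ i : Fin l, g (X j ω, W i ω) - I < ε := by
      have hN : (0 : ℝ) < (n : ℝ) * l := mul_pos hn' hl'
      have hdiv : (∑ j : Fin n, ∑ i : Fin l, g (X j ω, W i ω)) / ((n : ℝ) * l) < I + ε :=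
        (div_lt_iff₀ hN).mpr (by linarith)
      rw [one_div_mul_eq_div]
      linarith
    exact absurd hω (by simp only [Set.mem_setOf_eq, ge_iff_le, not_le]; exact hεlt)
  -- final assembly
  calc ℙ {ω | (1 / ((n : ℝ) * l)) * ∑ j : Fin n, ∑ i : Fin l, g (X j ω, W i ω)
        - I ≥ ε}
      ≤ ℙ ((⋃ j, (fun ω => (X j ω, Wv ω)) ⁻¹' E') ∪ F) := measure_mono hsub
  _ ≤ ℙ (⋃ j, (fun ω => (X j ω, Wv ω)) ⁻¹' E') + ℙ F := measure_union_le _ _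
  _ ≤ (∑ j : Fin n, ℙ ((fun ω => (X j ω, Wv ω)) ⁻¹' E')) + ℙ F := by
      exact add_le_add (measure_iUnion_fintype_le _ _) le_rfl
  _ ≤ (∑ _j : Fin n, ENNReal.ofReal (Real.exp (-(l * δA ^ 2))))
        + ENNReal.ofReal (Real.exp (-(n * δB ^ 2))) :=
      add_le_add (Finset.sum_le_sum fun j _ => hEj j) hFbound
  _ = ENNReal.ofReal ((n : ℝ) * Real.exp (-(l * δA ^ 2)) + Real.exp (-(n * δB ^ 2))) := by
      rw [Finset.sum_const, Finset.card_univ, Fintype.card_fin, nsmul_eq_mul,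
        ← ENNReal.ofReal_natCast n, ← ENNReal.ofReal_mul (Nat.cast_nonneg n),
        ← ENNReal.ofReal_add (by positivity) (Real.exp_nonneg _)]
  _ = ENNReal.ofReal ((n : ℝ) * Real.exp (-((l : ℝ) * α ^ 2 * ε ^ 2))
        + Real.exp (-((n : ℝ) * (1 - α) ^ 2 * ε ^ 2))) := by
      congr 2
      · rw [hδA]; ring_nf
      · rw [hδB]; ring_nf
end
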